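/- Let Γ be a simple directed graph with at most one directed edge between any pair of distinct vertices, and let w be a word over V(Γ) whose content is the vertex set of a full subgraph Γ' containing an oriented cycle. Then the powers [w]^k, k ∈ ℕ, are pairwise distinct elements of HK_Γ; in particular HK_Γ is infinite. -/

import Mathlib

/-- One-step Hecke-Kiselman edge relations for a directed graph with edge relation `E`. -/
def HKRel {V : Type*} (E : V → V → Prop) : FreeMonoid V → FreeMonoid V → Prop := fun a b =>
  (∃ x : V, a = FreeMonoid.of x * FreeMonoid.of x ∧ b = FreeMonoid.of x) ∨
  (∃ x y : V, x ≠ y ∧ ¬ E x y ∧ ¬ E y x ∧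
    a = FreeMonoid.of x * FreeMonoid.of y ∧ b = FreeMonoid.of y * FreeMonoid.of x) ∨
  (∃ x y : V, E x y ∧ ¬ E y x ∧
    a = FreeMonoid.of x * FreeMonoid.of y * FreeMonoid.of x ∧
    b = FreeMonoid.of y * FreeMonoid.of x * FreeMonoid.of y) ∨
  (∃ x y : V, E x y ∧ ¬ E y x ∧
    a = FreeMonoid.of x * FreeMonoid.of y * FreeMonoid.of x ∧
    b = FreeMonoid.of x * FreeMonoid.of y) ∨
  (∃ x y : V, E x y ∧ E y x ∧
    a = FreeMonoid.of x * FreeMonoid.of y * FreeMonoid.of x ∧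
    b = FreeMonoid.of y * FreeMonoid.of x * FreeMonoid.of y)

/-- The congruence on the free monoid generated by the Hecke-Kiselman relations. -/
def HKCon {V : Type*} (E : V → V → Prop) : Con (FreeMonoid V) := conGen (HKRel E)

/-- The Hecke-Kiselman monoid of the directed graph `(V, E)`. -/
def HK {V : Type*} (E : V → V → Prop) := (HKCon E).Quotient

instance {V : Type*} (E : V → V → Prop) : Monoid (HK E) :=
  inferInstanceAs (Monoid (HKCon E).Quotient)

/-- The canonical quotient map. -/
def HKmk {V : Type*} (E : V → V → Prop) : FreeMonoid V →* HK E := (HKCon E).mk'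

/-- The content of an element: vertices occurring in some representing word. -/
def elemContent {V : Type*} (E : V → V → Prop) (x : HK E) : Set V :=
  {v | ∃ w : FreeMonoid V, HKmk E w = x ∧ v ∈ FreeMonoid.toList w}


section Aux

variable {V : Type*}

/-- Decompose a list with a duplicate. -/
private lemma exists_dup_split {l : List V} (h : ¬ l.Nodup) :
    ∃ a v b c, l = a ++ v :: b ++ v :: c := by
  induction l with
  | nil => simp at h
  | cons x xs ih =>
    by_cases hx : x ∈ xs
    · obtain ⟨b, c, rfl⟩ := List.append_of_mem hx
      exact ⟨[], x, b, c, by simp⟩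
    · have hxs : ¬ xs.Nodup := by
        intro hn; exact h (List.nodup_cons.mpr ⟨hx, hn⟩)
      obtain ⟨a, v, b, c, rfl⟩ := ih hxs
      exact ⟨x :: a, v, b, c, by simp⟩

/-- From a transitive-closure loop, get a nodup closed walk. -/
private lemma exists_nodup_closed (R : V → V → Prop) {x : V} (h : Relation.TransGen R x x) :
    ∃ l : List V, ∃ hne : l ≠ [], l.Chain' R ∧ R (l.getLast hne) (l.head hne) ∧ l.Nodup := by
  classical
  obtain ⟨b, hxb, hbx⟩ := Relation.TransGen.tail'_iff.mp h
  obtain ⟨t, hchain, hlast⟩ := List.exists_isChain_cons_of_relationReflTransGen hxb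
  have key : ∀ N (l : List V) (hne : l ≠ []), l.length ≤ N → l.Chain' R →
      R (l.getLast hne) (l.head hne) →
      ∃ l' : List V, ∃ hne' : l' ≠ [], l'.Chain' R ∧ R (l'.getLast hne') (l'.head hne') ∧
        l'.Nodup := by
    intro N
    induction N with
    | zero =>
      intro l hne hlen _ _
      exact absurd (List.length_eq_zero_iff.mp (Nat.le_zero.mp hlen)) hne
    | succ N ih =>
      intro l hne hlen hch hwrap
      by_cases hnd : l.Nodup
      · exact ⟨l, hne, hch, hwrap, hnd⟩
      · obtain ⟨a, v, b2, c2, rfl⟩ := exists_dup_split hnd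
        have hinfix : (v :: b2 ++ v :: c2) <:+: (a ++ v :: b2 ++ v :: c2) :=
          ⟨a, [], by simp⟩
        have hch2 : List.Chain' R (v :: b2 ++ v :: c2) := hch.infix hinfix
        have hsplit := List.isChain_append.mp hch2
        have hwrap' : R ((v :: b2).getLast (List.cons_ne_nil _ _)) v := by
          apply hsplit.2.2
          · exact List.getLast?_eq_getLast _
          · rfl
        apply ih (v :: b2) (List.cons_ne_nil _ _) ?_ hsplit.1 hwrap'
        have := hlen
        simp only [List.length_append, List.length_cons] at this ⊢
        omega
  apply key (x :: t).length (x :: t) (List.cons_ne_nil _ _) le_rfl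
  · exact hchain
  · rw [hlast]; exact hbx

variable {E : V → V → Prop}

/-- Extract cycle data: a sequence of vertices going backwards along edges, staying
in the support, with small loops forbidden. -/
private lemma exists_cycle_data (hbidir : ∀ x y, ¬ (E x y ∧ E y x)) (hloop : ∀ x, ¬ E x x)
    (w : FreeMonoid V) {x : V}
    (hx : Relation.TransGen
      (fun u v => E u v ∧ u ∈ FreeMonoid.toList w ∧ v ∈ FreeMonoid.toList w) x x) :
    ∃ c : ℕ → V, (∀ m, E (c (m+1)) (c m)) ∧ (∀ m, c m ∈ FreeMonoid.toList w) ∧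
      (∀ m, c (m+1) ≠ c m) ∧ (∀ m, c (m+2) ≠ c m) := by
  classical
  set R : V → V → Prop :=
    fun u v => E u v ∧ u ∈ FreeMonoid.toList w ∧ v ∈ FreeMonoid.toList w with hR
  obtain ⟨l, hne, hch, hwrap, hnd⟩ := exists_nodup_closed R hx
  have hn3 : 3 ≤ l.length := by
    rcases l with _ | ⟨a, _ | ⟨b, _ | ⟨d, t⟩⟩⟩
    · exact absurd rfl hne
    · exact absurd hwrap.1 (hloop a)
    · have h1 : R a b := by
        exact List.isChain_pair.mp hch
      exact absurd ⟨h1.1, hwrap.1⟩ (hbidir a b)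
    · simp only [List.length_cons]; omega
  have npos : 0 < l.length := by omega
  set n := l.length with hn
  have hidx : ∀ m : ℕ, n - 1 - m % n < n := by
    intro m; have := Nat.mod_lt m npos; omega
  set c : ℕ → V := fun m => l.get ⟨n - 1 - m % n, hidx m⟩ with hc
  have hgetR : ∀ (i j : ℕ) (hi : i < n) (hj : j < n), j = i + 1 →
      R (l.get ⟨i, hi⟩) (l.get ⟨j, hj⟩) := by
    intro i j hi hj hij
    subst hij
    exact List.isChain_iff_getElem.mp hch i (by omega)
  have hceq : ∀ (m j : ℕ) (hj : j < n), n - 1 - m % n = j → c m = l.get ⟨j, hj⟩ := by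
    intro m j hj hmj
    simp only [hc]
    congr 1
    exact Fin.ext hmj
  have hmaster : ∀ m, R (c (m+1)) (c m) := by
    intro m
    have hr : m % n < n := Nat.mod_lt m npos
    have h1n : 1 % n = 1 := Nat.mod_eq_of_lt (by omega)
    have hmod : (m + 1) % n = (m % n + 1) % n := by
      conv_lhs => rw [Nat.add_mod, h1n]
    by_cases hcase : m % n + 1 = n
    · have h0 : (m + 1) % n = 0 := by rw [hmod, hcase, Nat.mod_self]
      have hL : c (m+1) = l.get ⟨n - 1, by omega⟩ := hceq _ _ _ (by rw [h0]; omega)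
      have hH : c m = l.get ⟨0, by omega⟩ := hceq _ _ _ (by omega)
      rw [hL, hH]
      have hlast : l.getLast hne = l.get ⟨n - 1, by omega⟩ := by
        rw [List.getLast_eq_getElem]
        rfl
      have hhead : l.head hne = l.get ⟨0, by omega⟩ := by
        rw [List.head_eq_getElem_zero hne]
        rfl
      rw [hlast, hhead] at hwrap
      exact hwrap
    · have hlt : m % n + 1 < n := by omega
      have h0 : (m + 1) % n = m % n + 1 := by rw [hmod]; exact Nat.mod_eq_of_lt hlt
      have hL : c (m+1) = l.get ⟨n - 1 - (m % n + 1), by omega⟩ := hceq _ _ _ (by rw [h0])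
      rw [hL]
      exact hgetR _ _ _ (hidx m) (by omega)
  have hinj : ∀ m k : ℕ, c m = c k → m % n = k % n := by
    intro m k hmk
    have h1 := List.nodup_iff_injective_get.mp hnd hmk
    have h2 : n - 1 - m % n = n - 1 - k % n := congrArg Fin.val h1
    have hm := Nat.mod_lt m npos
    have hk := Nat.mod_lt k npos
    omega
  have hdvd : ∀ (m k : ℕ), 0 < k → c (m + k) = c m → n ∣ k := by
    intro m k hk hmk
    have h1 : (m + k) % n = m % n := hinj _ _ hmk
    have h2 : m ≡ m + k [MOD n] := h1.symm
    have := (Nat.modEq_iff_dvd' (Nat.le_add_right m k)).mp h2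
    simpa using this
  refine ⟨c, fun m => (hmaster m).1, fun m => (hmaster m).2.2, ?_, ?_⟩
  · intro m hmk
    have := hdvd m 1 (by omega) hmk
    have := Nat.le_of_dvd (by omega) this
    omega
  · intro m hmk
    have := hdvd m 2 (by omega) hmk
    have := Nat.le_of_dvd (by omega) this
    omega

end Aux

section Rep

variable {V : Type*}

open Classical in
/-- The transformation of `ℕ` associated to a vertex. -/
private noncomputable def Frep (c : ℕ → V) (v : V) : Function.End ℕ :=
  fun m => if c m = v then m + 1 else m

private lemma Frep_app (c : ℕ → V) (v : V) (m : ℕ) [Decidable (c m = v)] :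
    Frep c v m = if c m = v then m + 1 else m := by
  simp only [Frep]
  split_ifs <;> simp_all

private lemma Frep_pos {c : ℕ → V} {v : V} {m : ℕ} (h : c m = v) : Frep c v m = m + 1 := by
  classical
  simp only [Frep_app, if_pos h]

private lemma Frep_neg {c : ℕ → V} {v : V} {m : ℕ} (h : c m ≠ v) : Frep c v m = m := by
  classical
  simp only [Frep_app, if_neg h]

private lemma Frep_le (c : ℕ → V) (v : V) (m : ℕ) : m ≤ Frep c v m := by
  by_cases h : c m = v
  · simp only [Frep_pos h]; omega
  · simp only [Frep_neg h]; omega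

variable {E : V → V → Prop}

private lemma Frep_rel (hbidir : ∀ x y, ¬ (E x y ∧ E y x)) (hloop : ∀ x, ¬ E x x)
    {c : ℕ → V} (hedge : ∀ m, E (c (m+1)) (c m))
    (hne1 : ∀ m, c (m+1) ≠ c m) (hne2 : ∀ m, c (m+2) ≠ c m) :
    ∀ a b, HKRel E a b → FreeMonoid.lift (Frep c) a = FreeMonoid.lift (Frep c) b := by
  have hmul : ∀ (f g : Function.End ℕ) (m : ℕ), (f * g) m = f (g m) := fun _ _ _ => rfl
  rintro a b (⟨x, rfl, rfl⟩ | ⟨x, y, hxy, hExy, hEyx, rfl, rfl⟩ |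
    ⟨x, y, hExy, hEyx, rfl, rfl⟩ | ⟨x, y, hExy, hEyx, rfl, rfl⟩ | ⟨x, y, h1, h2, rfl, rfl⟩)
  · -- idempotent
    simp only [map_mul, FreeMonoid.lift_eval_of]
    funext m
    rw [hmul]
    by_cases h : c m = x
    · simp only [Frep_pos h, Frep_neg (fun h' => hne1 m (h'.trans h.symm))]
    · simp only [Frep_neg h, Frep_neg h]
  · -- commuting
    simp only [map_mul, FreeMonoid.lift_eval_of]
    funext m
    rw [hmul, hmul]
    by_cases hx : c m = x
    · have hy : c m ≠ y := fun h => hxy (hx.symm.trans h)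
      have hy1 : c (m+1) ≠ y := fun h => hEyx (h ▸ hx ▸ hedge m)
      simp only [Frep_neg hy, Frep_pos hx, Frep_pos hx, Frep_neg hy1]
    · by_cases hy : c m = y
      · have hx1 : c (m+1) ≠ x := fun h => hExy (h ▸ hy ▸ hedge m)
        simp only [Frep_pos hy, Frep_neg hx1, Frep_neg hx, Frep_pos hy]
      · simp only [Frep_neg hy, Frep_neg hx, Frep_neg hx, Frep_neg hy]
  · -- xyx = yxy
    have hxy : x ≠ y := fun h => hloop y (h ▸ hExy)
    simp only [map_mul, FreeMonoid.lift_eval_of]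
    funext m
    rw [hmul, hmul, hmul, hmul]
    by_cases hx : c m = x
    · have hy : c m ≠ y := fun h => hxy (hx.symm.trans h)
      have hy1 : c (m+1) ≠ y := fun h => hEyx (h ▸ hx ▸ hedge m)
      have hx1 : c (m+1) ≠ x := fun h => hne1 m (h.trans hx.symm)
      simp only [Frep_pos hx, Frep_neg hy1, Frep_neg hx1, Frep_neg hy, Frep_pos hx, Frep_neg hy1]
    · by_cases hy : c m = y
      · have hy1 : c (m+1) ≠ y := fun h => hne1 m (h.trans hy.symm)
        by_cases hx1 : c (m+1) = x
        · have hy2 : c (m+2) ≠ y := fun h => hne2 m (h.trans hy.symm)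
          simp only [Frep_neg hx, Frep_pos hy, Frep_pos hx1, Frep_pos hy, Frep_pos hx1,
            Frep_neg hy2]
        · simp only [Frep_neg hx, Frep_pos hy, Frep_neg hx1, Frep_pos hy, Frep_neg hx1,
            Frep_neg hy1]
      · simp only [Frep_neg hx, Frep_neg hy, Frep_neg hx, Frep_neg hy, Frep_neg hx, Frep_neg hy]
  · -- xyx = xy
    have hxy : x ≠ y := fun h => hloop y (h ▸ hExy)
    simp only [map_mul, FreeMonoid.lift_eval_of]
    funext m
    rw [hmul, hmul, hmul]
    by_cases hx : c m = x
    · have hy : c m ≠ y := fun h => hxy (hx.symm.trans h)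
      have hy1 : c (m+1) ≠ y := fun h => hEyx (h ▸ hx ▸ hedge m)
      have hx1 : c (m+1) ≠ x := fun h => hne1 m (h.trans hx.symm)
      simp only [Frep_pos hx, Frep_neg hy1, Frep_neg hx1, Frep_neg hy, Frep_pos hx]
    · by_cases hy : c m = y
      · by_cases hx1 : c (m+1) = x
        · simp only [Frep_neg hx, Frep_pos hy, Frep_pos hx1, Frep_pos hy, Frep_pos hx1]
        · simp only [Frep_neg hx, Frep_pos hy, Frep_neg hx1, Frep_pos hy, Frep_neg hx1]
      · simp only [Frep_neg hx, Frep_neg hy, Frep_neg hx, Frep_neg hy, Frep_neg hx]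
  · exact absurd ⟨h1, h2⟩ (hbidir x y)

private lemma lift_le (c : ℕ → V) (u : FreeMonoid V) (m : ℕ) :
    m ≤ FreeMonoid.lift (Frep c) u m := by
  induction u using FreeMonoid.recOn generalizing m with
  | one => simp only [map_one]; exact le_rfl
  | of_mul x xs ih =>
    rw [map_mul]
    calc m ≤ FreeMonoid.lift (Frep c) xs m := ih m
    _ ≤ Frep c x (FreeMonoid.lift (Frep c) xs m) := Frep_le _ _ _
    _ = (FreeMonoid.lift (Frep c) (FreeMonoid.of x) * FreeMonoid.lift (Frep c) xs) m := rfl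

private lemma lift_bump (c : ℕ → V) {w : FreeMonoid V}
    (hmem : ∀ m, c m ∈ FreeMonoid.toList w) (m : ℕ) :
    m + 1 ≤ FreeMonoid.lift (Frep c) w m := by
  obtain ⟨s, t, hst⟩ := List.append_of_mem (hmem m)
  have hw : w = FreeMonoid.ofList s * (FreeMonoid.of (c m) * FreeMonoid.ofList t) := by
    rw [← FreeMonoid.ofList_cons, ← FreeMonoid.ofList_append, ← hst,
      FreeMonoid.ofList_toList]
  rw [hw, map_mul, map_mul, FreeMonoid.lift_eval_of]
  have h1 : m ≤ FreeMonoid.lift (Frep c) (FreeMonoid.ofList t) m := lift_le _ _ _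
  set m1 := FreeMonoid.lift (Frep c) (FreeMonoid.ofList t) m with hm1
  have hstep : m + 1 ≤ Frep c (c m) m1 := by
    rcases eq_or_lt_of_le h1 with heq | hlt
    · rw [← heq, Frep_pos rfl]
    · exact le_trans hlt (Frep_le _ _ _)
  calc m + 1 ≤ Frep c (c m) m1 := hstep
  _ ≤ FreeMonoid.lift (Frep c) (FreeMonoid.ofList s) (Frep c (c m) m1) := lift_le _ _ _
  _ = (FreeMonoid.lift (Frep c) (FreeMonoid.ofList s) *
      (Frep c (c m) * FreeMonoid.lift (Frep c) (FreeMonoid.ofList t))) m := rfl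

end Rep

/-- If the content of a word `w` (the vertex set of a full subgraph) contains an oriented
cycle, then the powers `[w]^k` are pairwise distinct; in particular the Hecke-Kiselman
monoid is infinite. -/
theorem hk_cycle_infinite_powers {V : Type*} (E : V → V → Prop)
    (hbidir : ∀ x y, ¬ (E x y ∧ E y x)) (hloop : ∀ x, ¬ E x x)
    (w : FreeMonoid V)
    (hcycle : ∃ x : V, Relation.TransGen
      (fun u v => E u v ∧ u ∈ FreeMonoid.toList w ∧ v ∈ FreeMonoid.toList w) x x) :
    Function.Injective (fun k : ℕ => (HKmk E w) ^ k) ∧ Infinite (HK E) := by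
  classical
  obtain ⟨x, hx⟩ := hcycle
  obtain ⟨c, hedge, hmem, hne1, hne2⟩ := exists_cycle_data hbidir hloop w hx
  set ψ : FreeMonoid V →* Function.End ℕ := FreeMonoid.lift (Frep c) with hψ
  have hrel : ∀ a b, HKRel E a b → ψ a = ψ b := Frep_rel hbidir hloop hedge hne1 hne2
  have hle : HKCon E ≤ Con.ker ψ := by
    apply Con.conGen_le.mpr
    intro a b hab
    exact (Con.ker_rel ψ).mpr (hrel a b hab)
  set Ψ : HK E →* Function.End ℕ := (HKCon E).lift ψ hle with hΨdef
  have hΨ : ∀ u : FreeMonoid V, Ψ (HKmk E u) = ψ u := fun u => Con.lift_mk' hle u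
  have hstrict : StrictMono (fun k : ℕ => ((ψ w) ^ k : Function.End ℕ) 0) := by
    apply strictMono_nat_of_lt_succ
    intro k
    have hpow : (ψ w) ^ (k + 1) = ψ w * (ψ w) ^ k := by
      rw [pow_succ']
    show ((ψ w) ^ k : Function.End ℕ) 0 < ((ψ w) ^ (k+1) : Function.End ℕ) 0
    rw [hpow]
    have h1 : ((ψ w) ^ k : Function.End ℕ) 0 + 1 ≤ ψ w (((ψ w) ^ k : Function.End ℕ) 0) :=
      lift_bump c hmem _
    exact lt_of_lt_of_le (Nat.lt_succ_self _) h1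
  have hinj : Function.Injective (fun k : ℕ => (HKmk E w) ^ k) := by
    intro j k hjk
    have h2 : (ψ w) ^ j = (ψ w) ^ k := by
      have h3 := congrArg Ψ hjk
      simpa only [map_pow, hΨ] using h3
    have h4 : ((ψ w) ^ j : Function.End ℕ) 0 = ((ψ w) ^ k : Function.End ℕ) 0 := by
      rw [h2]
    exact hstrict.injective h4
  exact ⟨hinj, Infinite.of_injective _ hinj⟩
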